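/- arXiv:2007.01859 — 4 statements merged into one kernel-verified Lean document; each statement's English description precedes it below -/
import Mathlib

section
/- Let γ, δ_L, δ_R be angles with 0 < γ, δ_L, δ_R ≥ 0, δ_L, δ_R < π/2, and γ + δ_L + δ_R < π. In the Euclidean plane let A, B_L, B_R be points with |AB_L| = |AB_R| and ∠B_L A B_R = γ, let C be the point inside ∠B_L A B_R such that ∠A B_σ C = π/2 + δ_σ for σ = L, R, and let P be the intersection of the perpendicular bisectors of segments B_L C and B_R C. Then ∠A B_L P = ∠A B_R P = γ/2 + δ_L + δ_R. -/
open EuclideanGeometry Real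

noncomputable instance stmt3Fact : Fact (Module.finrank ℝ (EuclideanSpace ℝ (Fin 2)) = 2) :=
  ⟨finrank_euclideanSpace_fin⟩

noncomputable instance stmt3Orient : Module.Oriented ℝ (EuclideanSpace ℝ (Fin 2)) (Fin 2) :=
  ⟨Module.Basis.orientation (EuclideanSpace.basisFun (Fin 2) ℝ).toBasis⟩

private lemma sign_coe_pos' {θ : ℝ} (h0 : 0 < θ) (hπ : θ < π) : ((θ : Real.Angle)).sign = 1 := by
  unfold Real.Angle.sign
  rw [Real.Angle.sin_coe]
  exact sign_pos (Real.sin_pos_of_pos_of_lt_pi h0 hπ)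

private lemma coe_inj' {a b : ℝ} (h : (a : Real.Angle) = b) (ha : |a| < π) (hb : |b| < π) :
    a = b := by
  obtain ⟨k, hk⟩ := Real.Angle.angle_eq_iff_two_pi_dvd_sub.1 h
  have hπ := Real.pi_pos
  rcases eq_or_ne k 0 with h0 | h0
  · rw [h0] at hk; push_cast at hk; linarith
  · exfalso
    have h1 : (1:ℝ) ≤ |(k:ℝ)| := by exact_mod_cast Int.one_le_abs h0
    have h2 : |a - b| < 2 * π := by
      calc |a - b| ≤ |a| + |b| := abs_sub a b
        _ < 2 * π := by linarith
    rw [hk, abs_mul] at h2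
    have : |2 * π| = 2 * π := abs_of_pos (by linarith)
    rw [this] at h2
    nlinarith

private lemma half_eq' {x : Real.Angle} {r : ℝ} (h : (2:ℤ) • x = (r : Real.Angle))
    (hx : |x.toReal| < π/2) (hr : |r| < π) : x = ((r/2 : ℝ) : Real.Angle) := by
  have h2 : ((2 * x.toReal : ℝ) : Real.Angle) = (r : Real.Angle) := by
    rw [← h]
    conv_rhs => rw [← Real.Angle.coe_toReal x]
    rw [← Real.Angle.coe_zsmul]
    congr 1
    simp [zsmul_eq_mul]
  have h3 : 2 * x.toReal = r := by
    refine coe_inj' h2 ?_ hr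
    rw [abs_mul, abs_two]
    linarith
  rw [← h3]
  conv_lhs => rw [← Real.Angle.coe_toReal x]
  congr 1
  ring

private lemma ang_pp_left (p q : EuclideanSpace ℝ (Fin 2)) : ∠ p p q = π / 2 := by
  unfold EuclideanGeometry.angle
  rw [vsub_self]
  exact InnerProductGeometry.angle_zero_left _

private lemma ang_pp_right (p q : EuclideanSpace ℝ (Fin 2)) : ∠ q p p = π / 2 := by
  unfold EuclideanGeometry.angle
  rw [vsub_self]
  exact InnerProductGeometry.angle_zero_right _

private lemma stmt3_core (γ δL δR : ℝ) (hγ : 0 < γ) (hδL : 0 ≤ δL) (hδR : 0 ≤ δR)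
    (hδL' : δL < Real.pi / 2) (hδR' : δR < Real.pi / 2)
    (hsum : γ + δL + δR < Real.pi)
    (A BL BR C P : EuclideanSpace ℝ (Fin 2))
    (hAB : dist A BL = dist A BR)
    (hangle : ∠ BL A BR = γ)
    (hCin : ∠ BL A C + ∠ C A BR = γ)
    (hCL : ∠ A BL C = Real.pi / 2 + δL)
    (hCR : ∠ A BR C = Real.pi / 2 + δR)
    (hPL : dist P BL = dist P C)
    (hPR : dist P BR = dist P C)
    (horient : ∡ BL A BR = (γ : Real.Angle)) :
    ∠ A BL P = γ / 2 + δL + δR ∧ ∠ A BR P = γ / 2 + δL + δR := by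
  have hπ := Real.pi_pos
  have hγπ : γ < π := by linarith
  -- nondegeneracy
  have hBLA : BL ≠ A := by
    intro h
    have hBR : BR = A := by
      refine dist_eq_zero.1 ?_
      rw [dist_comm, ← hAB, h, dist_self]
    rw [h, hBR, ang_pp_left, ang_pp_right] at hCin
    linarith
  have hBRA : BR ≠ A := by
    intro h
    have hBL : BL = A := by
      refine dist_eq_zero.1 ?_
      rw [dist_comm, hAB, h, dist_self]
    rw [h, hBL, ang_pp_left, ang_pp_right] at hCin
    linarith
  have hCA : C ≠ A := by
    intro h
    rw [h, angle_self_of_ne hBLA.symm] at hCL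
    linarith
  have hBLBR : BL ≠ BR := by
    intro h
    rw [h, angle_self_of_ne hBRA] at hangle
    linarith
  have hCBL : C ≠ BL := by
    intro h
    have hiso : ∠ A BL BR = ∠ A BR BL := angle_eq_angle_of_dist_eq hAB
    have hs3 : ∠ BL BR A + ∠ BR A BL + ∠ A BL BR = π :=
      angle_add_angle_add_angle_eq_pi A hBLBR.symm
    have e1 : ∠ A BR BL = π / 2 + δR := by rw [← h]; exact hCR
    have e2 : ∠ BR A BL = γ := by rw [angle_comm]; exact hangle
    rw [angle_comm BL BR A, e1, e2, hiso, e1] at hs3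
    linarith
  have hCBR : C ≠ BR := by
    intro h
    have hiso : ∠ A BL BR = ∠ A BR BL := angle_eq_angle_of_dist_eq hAB
    have hs3 : ∠ BL BR A + ∠ BR A BL + ∠ A BL BR = π :=
      angle_add_angle_add_angle_eq_pi A hBLBR.symm
    have e1 : ∠ A BL BR = π / 2 + δL := by rw [← h]; exact hCL
    have e2 : ∠ BR A BL = γ := by rw [angle_comm]; exact hangle
    rw [angle_comm BL BR A, ← hiso, e1, e2] at hs3
    linarith
  have hPBL : P ≠ BL := by
    intro h
    rw [h, dist_self] at hPL
    exact hCBL (dist_eq_zero.1 hPL.symm).symm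
  have hPBR : P ≠ BR := by
    intro h
    rw [h, dist_self] at hPR
    exact hCBR (dist_eq_zero.1 hPR.symm).symm
  -- step 2: angles at A
  set a := (∡ BL A C).toReal with ha_def
  set b := (∡ C A BR).toReal with hb_def
  have habs : ∠ BL A C = |a| := angle_eq_abs_oangle_toReal hBLA hCA
  have hbabs : ∠ C A BR = |b| := angle_eq_abs_oangle_toReal hCA hBRA
  have hCin' : |a| + |b| = γ := by rw [← habs, ← hbabs]; exact hCin
  have hcoea : ∡ BL A C = (a : Real.Angle) := (Real.Angle.coe_toReal _).symm
  have hcoeb : ∡ C A BR = (b : Real.Angle) := (Real.Angle.coe_toReal _).symm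
  have hoadd : ∡ BL A C + ∡ C A BR = ∡ BL A BR := oangle_add hBLA hCA hBRA
  have habγ : ((a + b : ℝ) : Real.Angle) = (γ : Real.Angle) := by
    rw [Real.Angle.coe_add, ← hcoea, ← hcoeb, hoadd, horient]
  have hab : a + b = γ := by
    refine coe_inj' habγ ?_ ?_
    · calc |a + b| ≤ |a| + |b| := abs_add_le a b
        _ < π := by linarith
    · rw [abs_of_pos hγ]; exact hγπ
  have ha0 : 0 ≤ a := by
    have := le_abs_self b
    have := le_abs_self a
    have := abs_nonneg a
    linarith
  have hb0 : 0 ≤ b := by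
    have := le_abs_self b
    have := le_abs_self a
    have := abs_nonneg b
    linarith
  have haa : |a| = a := abs_of_nonneg ha0
  have hbb : |b| = b := abs_of_nonneg hb0
  have haπ : a < π := by linarith
  have hbπ : b < π := by linarith
  -- sign analysis
  have hrotL : (∡ A BL C).sign = (∡ C A BL).sign := oangle_rotate_sign C A BL
  have hrevL : ∡ C A BL = -∡ BL A C := oangle_rev BL A C
  have hrotR : (∡ A BR C).sign = (∡ C A BR).sign := oangle_rotate_sign C A BR
  have hapos : 0 < a := by
    rcases ha0.lt_or_eq with h | h
    · exact h
    · exfalso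
      have hz : (∡ A BL C).sign = 0 := by
        rw [hrotL, hrevL, hcoea, ← h]
        simp
      rcases eq_zero_or_angle_eq_zero_or_pi_of_sign_oangle_eq_zero hz with h' | h' | h' | h'
      · exact hBLA h'.symm
      · exact hCBL h'
      · rw [hCL] at h'; linarith
      · rw [hCL] at h'; linarith
  have hbpos : 0 < b := by
    rcases hb0.lt_or_eq with h | h
    · exact h
    · exfalso
      have hz : (∡ A BR C).sign = 0 := by
        rw [hrotR, hcoeb, ← h]
        simp
      rcases eq_zero_or_angle_eq_zero_or_pi_of_sign_oangle_eq_zero hz with h' | h' | h' | h'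
      · exact hBRA h'.symm
      · exact hCBR h'
      · rw [hCR] at h'; linarith
      · rw [hCR] at h'; linarith
  have hsgnA : (∡ A BL C).sign = -1 := by
    rw [hrotL, hrevL, hcoea, Real.Angle.sign_neg, sign_coe_pos' hapos haπ]
  have hsgnB : (∡ A BR C).sign = 1 := by
    rw [hrotR, hcoeb, sign_coe_pos' hbpos hbπ]
  have hoL : ∡ A BL C = ((-(π / 2 + δL) : ℝ) : Real.Angle) := by
    rcases oangle_eq_angle_or_eq_neg_angle hBLA.symm hCBL with h | h
    · exfalso
      rw [h, hCL, sign_coe_pos' (by linarith) (by linarith)] at hsgnA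
      exact absurd hsgnA (by decide)
    · rw [h, hCL, Real.Angle.coe_neg]
  have hoR : ∡ A BR C = ((π / 2 + δR : ℝ) : Real.Angle) := by
    rcases oangle_eq_angle_or_eq_neg_angle hBRA.symm hCBR with h | h
    · rw [h, hCR]
    · exfalso
      rw [h, hCR, Real.Angle.sign_neg, sign_coe_pos' (by linarith) (by linarith)] at hsgnB
      exact absurd hsgnB (by decide)
  -- angles at C
  have h1 : ∡ A BL C + ∡ BL C A + ∡ C A BL = (π : Real.Angle) :=
    oangle_add_oangle_add_oangle_eq_pi hBLA hCBL hCA.symm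
  have hBCA : ∡ BL C A = ((a + δL - π / 2 : ℝ) : Real.Angle) := by
    have h' : ∡ BL C A = (π : Real.Angle) - ∡ A BL C - ∡ C A BL := by rw [← h1]; abel
    rw [hoL, hrevL, hcoea] at h'
    rw [h']
    simp only [← Real.Angle.coe_neg, ← Real.Angle.coe_sub]
    exact Real.Angle.angle_eq_iff_two_pi_dvd_sub.2 ⟨1, by push_cast; ring⟩
  have h2 : ∡ A BR C + ∡ BR C A + ∡ C A BR = (π : Real.Angle) :=
    oangle_add_oangle_add_oangle_eq_pi hBRA hCBR hCA.symm
  have hACBR : ∡ A C BR = ((b + δR - π / 2 : ℝ) : Real.Angle) := by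
    have h' : ∡ BR C A = (π : Real.Angle) - ∡ A BR C - ∡ C A BR := by rw [← h2]; abel
    rw [hoR, hcoeb] at h'
    have h'' : ∡ A C BR = -∡ BR C A := oangle_rev BR C A
    rw [h'', h']
    simp only [← Real.Angle.coe_neg, ← Real.Angle.coe_sub]
    exact Real.Angle.angle_eq_iff_two_pi_dvd_sub.2 ⟨0, by push_cast; ring⟩
  have hBLCBR : ∡ BL C BR = ((γ + δL + δR - π : ℝ) : Real.Angle) := by
    have h' : ∡ BL C A + ∡ A C BR = ∡ BL C BR := oangle_add hCBL.symm hCA.symm hCBR.symm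
    rw [hBCA, hACBR] at h'
    rw [← h']
    simp only [← Real.Angle.coe_add]
    refine Real.Angle.angle_eq_iff_two_pi_dvd_sub.2 ⟨0, ?_⟩
    push_cast
    rw [← hab]
    ring
  -- inscribed angle: P is the circumcenter
  have hBLs : dist BL P = dist P C := by rw [dist_comm]; exact hPL
  have hBRs : dist BR P = dist P C := by rw [dist_comm]; exact hPR
  have hCs : dist C P = dist P C := dist_comm C P
  have hcen : ∡ BL P BR = (2 : ℤ) • ∡ BL C BR :=
    Sphere.oangle_center_eq_two_zsmul_oangle
      (s := ⟨P, dist P C⟩) hBLs hCs hBRs hCBL hCBR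
  have hBPBR : ∡ BL P BR = ((2 * (γ + δL + δR) - 2 * π : ℝ) : Real.Angle) := by
    rw [hcen, hBLCBR, ← Real.Angle.coe_zsmul]
    refine Real.Angle.angle_eq_iff_two_pi_dvd_sub.2 ⟨0, ?_⟩
    simp only [zsmul_eq_mul]
    push_cast
    ring
  -- isosceles triangle P BL BR
  have hPP : dist P BL = dist P BR := hPL.trans hPR.symm
  have hx : |(∡ P BL BR).toReal| < π / 2 := abs_oangle_right_toReal_lt_pi_div_two_of_dist_eq hPP
  have happ : ∡ BR P BL = (π : Real.Angle) - (2 : ℤ) • ∡ P BL BR :=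
    oangle_eq_pi_sub_two_zsmul_oangle_of_dist_eq hBLBR hPP
  have h2x : (2 : ℤ) • ∡ P BL BR = ((2 * (γ + δL + δR) - π : ℝ) : Real.Angle) := by
    have h' : (2 : ℤ) • ∡ P BL BR = (π : Real.Angle) - ∡ BR P BL := by rw [happ]; abel
    rw [h', oangle_rev BL P BR, hBPBR]
    simp only [← Real.Angle.coe_neg, ← Real.Angle.coe_sub]
    exact Real.Angle.angle_eq_iff_two_pi_dvd_sub.2 ⟨0, by push_cast; ring⟩
  have hPBLBR : ∡ P BL BR = ((γ + δL + δR - π / 2 : ℝ) : Real.Angle) := by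
    have h' := half_eq' h2x hx (by rw [abs_lt]; constructor <;> linarith)
    rw [h']
    congr 1
    ring
  -- isosceles triangle A BL BR
  have hy : |(∡ A BL BR).toReal| < π / 2 := abs_oangle_right_toReal_lt_pi_div_two_of_dist_eq hAB
  have happ2 : ∡ BR A BL = (π : Real.Angle) - (2 : ℤ) • ∡ A BL BR :=
    oangle_eq_pi_sub_two_zsmul_oangle_of_dist_eq hBLBR hAB
  have h2y : (2 : ℤ) • ∡ A BL BR = ((γ - π : ℝ) : Real.Angle) := by
    have h' : (2 : ℤ) • ∡ A BL BR = (π : Real.Angle) - ∡ BR A BL := by rw [happ2]; abel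
    rw [h', oangle_rev BL A BR, horient]
    simp only [← Real.Angle.coe_neg, ← Real.Angle.coe_sub]
    exact Real.Angle.angle_eq_iff_two_pi_dvd_sub.2 ⟨1, by push_cast; ring⟩
  have hABLBR : ∡ A BL BR = (((γ - π) / 2 : ℝ) : Real.Angle) :=
    half_eq' h2y hy (by rw [abs_lt]; constructor <;> linarith)
  -- final assembly
  have hT0 : 0 < γ / 2 + δL + δR := by linarith
  have hTπ : γ / 2 + δL + δR < π := by linarith
  constructor
  · have hadd : ∡ A BL BR + ∡ BR BL P = ∡ A BL P :=
      oangle_add hBLA.symm hBLBR.symm hPBL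
    have hfin : ∡ A BL P = ((-(γ / 2 + δL + δR) : ℝ) : Real.Angle) := by
      rw [← hadd, hABLBR, oangle_rev P BL BR, hPBLBR]
      simp only [← Real.Angle.coe_neg, ← Real.Angle.coe_add]
      exact Real.Angle.angle_eq_iff_two_pi_dvd_sub.2 ⟨0, by push_cast; ring⟩
    rw [angle_eq_abs_oangle_toReal hBLA.symm hPBL, hfin,
      Real.Angle.toReal_coe_eq_self_iff.2 ⟨by linarith, by linarith⟩, abs_neg,
      abs_of_pos hT0]
  · have hadd : ∡ A BR BL + ∡ BL BR P = ∡ A BR P :=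
      oangle_add hBRA.symm hBLBR hPBR
    have hiso2 : ∡ A BL BR = ∡ BL BR A := oangle_eq_oangle_of_dist_eq hAB
    have hiso3 : ∡ P BL BR = ∡ BL BR P := oangle_eq_oangle_of_dist_eq hPP
    have hfin : ∡ A BR P = ((γ / 2 + δL + δR : ℝ) : Real.Angle) := by
      rw [← hadd, oangle_rev BL BR A, ← hiso2, hABLBR, ← hiso3, hPBLBR]
      simp only [← Real.Angle.coe_neg, ← Real.Angle.coe_add]
      exact Real.Angle.angle_eq_iff_two_pi_dvd_sub.2 ⟨0, by push_cast; ring⟩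
    rw [angle_eq_abs_oangle_toReal hBRA.symm hPBR, hfin,
      Real.Angle.toReal_coe_eq_self_iff.2 ⟨by linarith, by linarith⟩,
      abs_of_pos hT0]

theorem stmt_3 (γ δL δR : ℝ) (hγ : 0 < γ) (hδL : 0 ≤ δL) (hδR : 0 ≤ δR)
    (hδL' : δL < Real.pi / 2) (hδR' : δR < Real.pi / 2)
    (hsum : γ + δL + δR < Real.pi)
    (A BL BR C P : EuclideanSpace ℝ (Fin 2))
    (hAB : dist A BL = dist A BR)
    (hangle : ∠ BL A BR = γ)
    (hCin : ∠ BL A C + ∠ C A BR = γ)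
    (hCL : ∠ A BL C = Real.pi / 2 + δL)
    (hCR : ∠ A BR C = Real.pi / 2 + δR)
    (hPL : dist P BL = dist P C)
    (hPR : dist P BR = dist P C) :
    ∠ A BL P = γ / 2 + δL + δR ∧ ∠ A BR P = γ / 2 + δL + δR := by
  have hπ := Real.pi_pos
  have hγπ : γ < π := by linarith
  have hBLA : BL ≠ A := by
    intro h
    have hBR : BR = A := by
      refine dist_eq_zero.1 ?_
      rw [dist_comm, ← hAB, h, dist_self]
    rw [h, hBR, ang_pp_left, ang_pp_right] at hCin
    linarith
  have hBRA : BR ≠ A := by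
    intro h
    have hBL : BL = A := by
      refine dist_eq_zero.1 ?_
      rw [dist_comm, hAB, h, dist_self]
    rw [h, hBL, ang_pp_left, ang_pp_right] at hCin
    linarith
  rcases oangle_eq_angle_or_eq_neg_angle hBLA hBRA with h | h
  · exact stmt3_core γ δL δR hγ hδL hδR hδL' hδR' hsum A BL BR C P hAB hangle hCin hCL hCR
      hPL hPR (by rw [h, hangle])
  · have h' : ∡ BR A BL = (γ : Real.Angle) := by
      rw [oangle_rev BL A BR, h, hangle, neg_neg]
    obtain ⟨h2, h1⟩ := stmt3_core γ δR δL hγ hδR hδL hδR' hδL' (by linarith) A BR BL C P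
      hAB.symm (by rw [angle_comm]; exact hangle)
      (by rw [angle_comm BR A C, angle_comm C A BL, add_comm]; exact hCin)
      hCR hCL hPR hPL h'
    exact ⟨by linarith, by linarith⟩
end

section
/- For any real r > 1 and any angle ψ with the relevant quantities defined, setting ρ = arctan( sin ψ / (r − cos ψ) ), one has tan(ψ/2 + ρ) = ((r+1)/(r−1))·tan(ψ/2). -/
theorem stmt_6 (r ψ : ℝ) (hr : 1 < r) (hψ : |ψ| < Real.pi)
    (ρ : ℝ) (hρ : ρ = Real.arctan (Real.sin ψ / (r - Real.cos ψ))) :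
    Real.tan (ψ / 2 + ρ) = ((r + 1) / (r - 1)) * Real.tan (ψ / 2) := by
  obtain ⟨h1, h2⟩ := abs_lt.mp hψ
  have hπ := Real.pi_pos
  have hc : 0 < Real.cos (ψ / 2) :=
    Real.cos_pos_of_mem_Ioo ⟨by linarith, by linarith⟩
  have hrc : 0 < r - Real.cos ψ := by nlinarith [Real.cos_le_one ψ]
  set s := Real.sin (ψ / 2) with hs
  set c := Real.cos (ψ / 2) with hcdef
  have hsc : s ^ 2 + c ^ 2 = 1 := Real.sin_sq_add_cos_sq _
  have hsin : Real.sin ψ = 2 * s * c := by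
    rw [show ψ = 2 * (ψ / 2) by ring, Real.sin_two_mul]
  have hcos : Real.cos ψ = 2 * c ^ 2 - 1 := by
    rw [show ψ = 2 * (ψ / 2) by ring, Real.cos_two_mul]
  have hρcos : 0 < Real.cos ρ := by
    rw [hρ]
    exact Real.cos_pos_of_mem_Ioo
      ⟨Real.neg_pi_div_two_lt_arctan _, Real.arctan_lt_pi_div_two _⟩
  have hsρ : Real.sin ρ = Real.sin ψ / (r - Real.cos ψ) * Real.cos ρ := by
    have h := Real.tan_arctan (Real.sin ψ / (r - Real.cos ψ))
    rw [← hρ, Real.tan_eq_sin_div_cos] at h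
    rw [div_mul_eq_mul_div, eq_div_iff hrc.ne']
    rw [div_eq_div_iff hρcos.ne' hrc.ne'] at h
    linarith
  have hD : (0:ℝ) < r - (2 * c ^ 2 - 1) := by rw [← hcos]; exact hrc
  have hnum : s * Real.cos ρ + c * Real.sin ρ
      = Real.cos ρ * s * (r + 1) / (r - (2 * c ^ 2 - 1)) := by
    rw [hsρ, hsin, hcos]
    rw [div_mul_eq_mul_div, mul_div_assoc', add_div' _ _ _ hD.ne', div_left_inj' hD.ne']
    ring
  have hden : c * Real.cos ρ - s * Real.sin ρ
      = Real.cos ρ * c * (r - 1) / (r - (2 * c ^ 2 - 1)) := by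
    rw [hsρ, hsin, hcos]
    rw [div_mul_eq_mul_div, mul_div_assoc', sub_div' hD.ne', div_left_inj' hD.ne']
    linear_combination (-2 * c * Real.cos ρ) * hsc
  rw [Real.tan_eq_sin_div_cos, Real.sin_add, Real.cos_add, Real.tan_eq_sin_div_cos,
    hnum, hden, ← hs, ← hcdef]
  rw [div_div_div_comm, div_self hD.ne', div_one]
  have hr1 : r - 1 ≠ 0 := by linarith
  have h3 : Real.cos ρ ≠ 0 := hρcos.ne'
  have h4 : c ≠ 0 := hc.ne'
  field_simp
end

section
/- Let β_σ ∈ (0, π), γ ∈ (0, π) with β_σ + γ/2 < π for σ = L, R, and suppose β_L + β_R + γ/2 > π. Set c = tan(γ/2) and tan ζ_σ = 1/(2/c + 1/tan β_σ) (with ζ_σ = γ/2 if β_σ + γ/2 ≥ π). Then ζ_L + ζ_R > γ/2. -/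
set_option maxHeartbeats 1000000


theorem stmt_11 (βL βR γ : ℝ)
    (hβL : 0 < βL) (hβL' : βL < Real.pi) (hβR : 0 < βR) (hβR' : βR < Real.pi)
    (hγ0 : 0 < γ) (hγπ : γ < Real.pi)
    (hLγ : βL + γ / 2 < Real.pi) (hRγ : βR + γ / 2 < Real.pi)
    (hsum : βL + βR + γ / 2 > Real.pi)
    (c : ℝ) (hc : c = Real.tan (γ / 2)) :
    Real.arctan (1 / (2 / c + 1 / Real.tan βL)) +
      Real.arctan (1 / (2 / c + 1 / Real.tan βR)) > γ / 2 := by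
  have hπ := Real.pi_pos
  set t := γ / 2 with ht_def
  have ht0 : 0 < t := by positivity
  have ht2 : t < Real.pi / 2 := by simp only [ht_def]; linarith
  have hst : 0 < Real.sin t := Real.sin_pos_of_pos_of_lt_pi ht0 (by linarith)
  have hct : 0 < Real.cos t := Real.cos_pos_of_mem_Ioo ⟨by linarith, ht2⟩
  have hsL : 0 < Real.sin βL := Real.sin_pos_of_pos_of_lt_pi hβL hβL'
  have hsR : 0 < Real.sin βR := Real.sin_pos_of_pos_of_lt_pi hβR hβR'
  set st := Real.sin t
  set ct := Real.cos t
  set sL := Real.sin βL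
  set cL := Real.cos βL
  set sR := Real.sin βR
  set cR := Real.cos βR
  have hpy : st ^ 2 + ct ^ 2 = 1 := Real.sin_sq_add_cos_sq t
  have hcval : c = st / ct := by rw [hc, Real.tan_eq_sin_div_cos]
  -- the two sines of β + t, positive
  have hsLt : 0 < sL * ct + cL * st := by
    have := Real.sin_pos_of_pos_of_lt_pi (show 0 < βL + t by linarith) (by linarith)
    rwa [Real.sin_add] at this
  have hsRt : 0 < sR * ct + cR * st := by
    have := Real.sin_pos_of_pos_of_lt_pi (show 0 < βR + t by linarith) (by linarith)
    rwa [Real.sin_add] at this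
  -- denominators
  set NL := 2 * ct * sL + cL * st with hNL_def
  set NR := 2 * ct * sR + cR * st with hNR_def
  have hNL : 0 < NL := by simp only [hNL_def]; nlinarith [mul_pos hct hsL]
  have hNR : 0 < NR := by simp only [hNR_def]; nlinarith [mul_pos hct hsR]
  have heL : 1 / (2 / c + 1 / Real.tan βL) = st * sL / NL := by
    rw [hcval, Real.tan_eq_sin_div_cos, one_div_div]
    rw [show (2 : ℝ) / (st / ct) + cL / sL = NL / (st * sL) by
      field_simp [hNL_def]; linarith [hNL_def], one_div_div]
  have heR : 1 / (2 / c + 1 / Real.tan βR) = st * sR / NR := by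
    rw [hcval, Real.tan_eq_sin_div_cos, one_div_div]
    rw [show (2 : ℝ) / (st / ct) + cR / sR = NR / (st * sR) by
      field_simp [hNR_def]; linarith [hNR_def], one_div_div]
  rw [heL, heR]
  set xL := st * sL / NL with hxL_def
  set xR := st * sR / NR with hxR_def
  have hxL : 0 < xL := by positivity
  have hxR : 0 < xR := by positivity
  have hxLN : xL * NL = st * sL := by rw [hxL_def]; exact div_mul_cancel₀ _ (ne_of_gt hNL)
  have hxRN : xR * NR = st * sR := by rw [hxR_def]; exact div_mul_cancel₀ _ (ne_of_gt hNR)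
  -- key trig inequality : sin(βL+t) sin(βR+t) < sin βL sin βR
  have hS : Real.sin (βL + βR + t) < 0 := by
    have h1 : 0 < Real.sin (βL + βR + t - Real.pi) :=
      Real.sin_pos_of_pos_of_lt_pi (by linarith) (by linarith)
    rw [Real.sin_sub_pi] at h1; linarith
  have hSexp : Real.sin (βL + βR + t) =
      (sL * cR + cL * sR) * ct + (cL * cR - sL * sR) * st := by
    rw [Real.sin_add, Real.sin_add, Real.cos_add]
  have hkey : (sL * ct + cL * st) * (sR * ct + cR * st) < sL * sR := by
    rw [hSexp] at hS
    have h1 : 0 < st * (-((sL * cR + cL * sR) * ct + (cL * cR - sL * sR) * st)) :=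
      mul_pos hst (by linarith)
    have hid : sL * sR - (sL * ct + cL * st) * (sR * ct + cR * st)
        = st * (-((sL * cR + cL * sR) * ct + (cL * cR - sL * sR) * st))
          + sL * sR * (1 - (st ^ 2 + ct ^ 2)) := by ring
    rw [hpy] at hid
    nlinarith [h1, hid]
  -- the main inequality on tangents
  have hfin : st - ct * xR < xL * (ct + st * xR) := by
    have hmul : (st - ct * xR) * (NL * NR) < xL * (ct + st * xR) * (NL * NR) := by
      have e1 : (st - ct * xR) * (NL * NR) = st * NL * NR - ct * (st * sR) * NL := by
        rw [show st * NL * NR - ct * (st * sR) * NL = st * NL * NR - ct * (xR * NR) * NL by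
          rw [hxRN]]
        ring
      have e2 : xL * (ct + st * xR) * (NL * NR)
          = st * sL * (ct * NR + st * (st * sR)) := by
        rw [show st * sL * (ct * NR + st * (st * sR))
            = (xL * NL) * (ct * NR + st * (xR * NR)) by rw [hxLN, hxRN]]
        ring
      rw [e1, e2]
      have hprod : 0 < st * (sL * sR - (sL * ct + cL * st) * (sR * ct + cR * st)) :=
        mul_pos hst (by linarith)
      simp only [hNL_def, hNR_def]
      have hid2 : st * sL * (ct * (2 * ct * sR + cR * st) + st * (st * sR))
            - (st * (2 * ct * sL + cL * st) * (2 * ct * sR + cR * st)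
              - ct * (st * sR) * (2 * ct * sL + cL * st))
          = st * (sL * sR - (sL * ct + cL * st) * (sR * ct + cR * st))
            + st * (sL * sR) * ((st ^ 2 + ct ^ 2) - 1) := by ring
      rw [hpy] at hid2
      linarith [hprod, hid2]
    exact lt_of_mul_lt_mul_right hmul (le_of_lt (mul_pos hNL hNR))
  -- conclude via arctan
  have hζR0 : 0 < Real.arctan xR := by
    have := Real.arctan_strictMono hxR
    rwa [Real.arctan_zero] at this
  have harg1 : -(Real.pi / 2) < t - Real.arctan xR := by
    have := Real.arctan_lt_pi_div_two xR; linarith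
  have harg2 : t - Real.arctan xR < Real.pi / 2 := by linarith
  have hcosζ : 0 < Real.cos (t - Real.arctan xR) :=
    Real.cos_pos_of_mem_Ioo ⟨harg1, harg2⟩
  have htan : Real.tan (t - Real.arctan xR) < xL := by
    rw [Real.tan_eq_sin_div_cos, div_lt_iff₀ hcosζ, Real.sin_sub, Real.cos_sub,
      Real.sin_arctan, Real.cos_arctan]
    have hsq : 0 < Real.sqrt (1 + xR ^ 2) := Real.sqrt_pos.mpr (by positivity)
    rw [show st * (1 / Real.sqrt (1 + xR ^ 2)) - ct * (xR / Real.sqrt (1 + xR ^ 2))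
        = (st - ct * xR) / Real.sqrt (1 + xR ^ 2) by ring]
    rw [show xL * (ct * (1 / Real.sqrt (1 + xR ^ 2)) + st * (xR / Real.sqrt (1 + xR ^ 2)))
        = xL * (ct + st * xR) / Real.sqrt (1 + xR ^ 2) by ring]
    exact div_lt_div_of_pos_right hfin hsq
  have := Real.arctan_strictMono htan
  rw [Real.arctan_tan harg1 harg2] at this
  linarith
end

section
/- Let β ∈ (0, π) and γ ∈ (0, π) with β + γ/2 < π, c = tan(γ/2), and let ζ = arctan(1/(2/c + 1/tan β)). Then β + γ/4 ≤ π/2 if and only if ζ ≤ γ/4, and β + γ/4 ≥ π/2 if and only if ζ ≥ γ/4. -/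
theorem stmt_12 (β γ : ℝ) (hβ0 : 0 < β) (hβπ : β < Real.pi)
    (hγ0 : 0 < γ) (hγπ : γ < Real.pi) (hβγ : β + γ / 2 < Real.pi)
    (c ζ : ℝ) (hc : c = Real.tan (γ / 2))
    (hζ : ζ = Real.arctan (1 / (2 / c + 1 / Real.tan β))) :
    (β + γ / 4 ≤ Real.pi / 2 ↔ ζ ≤ γ / 4) ∧
    (β + γ / 4 ≥ Real.pi / 2 ↔ ζ ≥ γ / 4) := by
  have hπ := Real.pi_pos
  set t := γ / 4 with ht
  have ht0 : 0 < t := by positivity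
  have ht4 : t < Real.pi / 4 := by simp only [ht]; linarith
  have htlt : t < Real.pi / 2 := by linarith
  set u := Real.tan t with hu
  have hu0 : 0 < u := Real.tan_pos_of_pos_of_lt_pi_div_two ht0 htlt
  have hu1 : u < 1 := by
    have := Real.tan_lt_tan_of_nonneg_of_lt_pi_div_two ht0.le
      (by linarith : Real.pi / 4 < Real.pi / 2) ht4
    rwa [Real.tan_pi_div_four] at this
  -- c = tan(2t)
  have h2t : γ / 2 = 2 * t := by rw [ht]; ring
  have hcval : c = 2 * u / (1 - u ^ 2) := by
    rw [hc, h2t, Real.tan_two_mul]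
  have hc0 : 0 < c := by
    rw [hc, h2t]
    exact Real.tan_pos_of_pos_of_lt_pi_div_two (by linarith) (by linarith)
  have hu2 : (0:ℝ) < 1 - u ^ 2 := by nlinarith
  have h2c : 2 / c = (1 - u ^ 2) / u := by
    rw [hcval]; field_simp
  set v := 1 / Real.tan β with hv
  clear_value u
  have keyA : (u ≤ v ↔ β + t ≤ Real.pi / 2) ∧ (v ≤ u ↔ Real.pi / 2 ≤ β + t) := by
    rcases lt_trichotomy β (Real.pi / 2) with hb | hb | hb
    · have hmemt : t ∈ Set.Ioo (-(Real.pi / 2)) (Real.pi / 2) :=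
        ⟨by linarith, htlt⟩
      have hmemb : Real.pi / 2 - β ∈ Set.Ioo (-(Real.pi / 2)) (Real.pi / 2) :=
        ⟨by linarith, by linarith⟩
      have hveq : v = Real.tan (Real.pi / 2 - β) := by
        rw [hv, Real.tan_pi_div_two_sub, one_div]
      constructor
      · rw [hveq, hu, Real.strictMonoOn_tan.le_iff_le hmemt hmemb]
        constructor <;> intro h <;> linarith
      · rw [hveq, hu, Real.strictMonoOn_tan.le_iff_le hmemb hmemt]
        constructor <;> intro h <;> linarith
    · have hv0 : v = 0 := by rw [hv, hb, Real.tan_pi_div_two]; simp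
      constructor
      · constructor <;> intro h <;> [linarith; linarith]
      · constructor <;> intro h <;> [linarith; linarith]
    · have htb : Real.tan β < 0 := by
        have : Real.tan (β - Real.pi) = Real.tan β := Real.tan_periodic.sub_eq β
        rw [← this]
        exact Real.tan_neg_of_neg_of_pi_div_two_lt (by linarith) (by linarith)
      have hv0 : v < 0 := by rw [hv]; exact div_neg_of_pos_of_neg one_pos htb
      constructor
      · constructor <;> intro h <;> [linarith; linarith]
      · constructor <;> intro h <;> [linarith; linarith]
    -- positivity of the denominator D = 2/c + v
  have hD : 0 < 2 / c + v := by
    rcases le_or_gt β (Real.pi / 2) with hb | hb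
    · have hv0 : 0 ≤ v := by
        rcases eq_or_lt_of_le hb with hb' | hb'
        · rw [hv, hb', Real.tan_pi_div_two]; simp
        · have := Real.tan_pos_of_pos_of_lt_pi_div_two hβ0 hb'
          positivity
      have : 0 < 2 / c := by positivity
      linarith
    · -- β > π/2 : use β + 2t < π to bound tan β < -c
      have h2tmem : 2 * t ∈ Set.Ioo (-(Real.pi / 2)) (Real.pi / 2) :=
        ⟨by linarith, by linarith⟩
      have hbmem : Real.pi - β ∈ Set.Ioo (-(Real.pi / 2)) (Real.pi / 2) :=
        ⟨by linarith, by linarith⟩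
      have h2lt : 2 * t < Real.pi - β := by
        have : β + γ / 2 < Real.pi := hβγ
        rw [h2t] at this; linarith
      have htan : c < Real.tan (Real.pi - β) := by
        rw [hc, h2t]
        exact Real.strictMonoOn_tan h2tmem hbmem h2lt
      have htanb : Real.tan (Real.pi - β) = -Real.tan β := by
        rw [show Real.pi - β = -β + Real.pi by ring, Real.tan_periodic (-β),
          Real.tan_neg]
      have htb : Real.tan β < -c := by rw [htanb] at htan; linarith
      have htbneg : Real.tan β < 0 := by linarith
      have hsum : v + 1 / c = (c + Real.tan β) / (Real.tan β * c) := by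
        rw [hv, div_add_div _ _ htbneg.ne hc0.ne', one_mul, mul_one, add_comm]
      have hpos : 0 < (c + Real.tan β) / (Real.tan β * c) :=
        div_pos_of_neg_of_neg (by linarith) (by nlinarith)
      have hvgt : -(1 / c) < v := by linarith
      have h12 : 2 / c - 1 / c = 1 / c := by ring
      have h1c : (0:ℝ) < 1 / c := by positivity
      linarith
  -- reduce ζ comparisons to u vs v
  have hζeq : ζ = Real.arctan (1 / (2 / c + v)) := hζ
  clear_value v t
  have htarc : Real.arctan u = t := by
    rw [hu]; exact Real.arctan_tan (by linarith) htlt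
  have hmul : u * ((1 - u ^ 2) / u + v) = (1 - u ^ 2) + u * v := by
    field_simp
  have hiff : 1 ≤ (1 - u ^ 2) + u * v ↔ u ≤ v := by
    rw [show (1 - u ^ 2) + u * v = 1 + u * (v - u) by ring]
    constructor
    · intro h
      by_contra hcon
      push_neg at hcon
      have : u * (v - u) < 0 := mul_neg_of_pos_of_neg hu0 (by linarith)
      linarith
    · intro h
      have h0 : 0 ≤ u * (v - u) := mul_nonneg hu0.le (by linarith)
      linarith
  have hiff2 : (1 - u ^ 2) + u * v ≤ 1 ↔ v ≤ u := by
    rw [show (1 - u ^ 2) + u * v = 1 - u * (u - v) by ring]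
    constructor
    · intro h
      by_contra hcon
      push_neg at hcon
      have : u * (u - v) < 0 := mul_neg_of_pos_of_neg hu0 (by linarith)
      linarith
    · intro h
      have h0 : 0 ≤ u * (u - v) := mul_nonneg hu0.le (by linarith)
      linarith
  have hle : ζ ≤ t ↔ u ≤ v := by
    rw [hζeq, ← htarc, Real.arctan_strictMono.le_iff_le, div_le_iff₀ hD, h2c,
      hmul]
    exact hiff
  have hge : t ≤ ζ ↔ v ≤ u := by
    rw [hζeq, ← htarc, Real.arctan_strictMono.le_iff_le, le_div_iff₀ hD, h2c,
      hmul]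
    exact hiff2
  refine ⟨?_, ?_⟩
  · rw [hle]; exact keyA.1.symm
  · exact ⟨fun h => hge.mpr (keyA.2.mpr h), fun h => keyA.2.mp (hge.mp h)⟩
end
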